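/- There exists a universal constant c > 0 with the following property. Let ε > 0, let g_ε(x) = e^{−εx²}, let h_ε(x) = (4πε)^{−1/2} e^{−x²/(4ε)}, and for θ₀ ∈ L¹(ℝ) with ∫_ℝ (1 + |ξ|) |θ̂₀(ξ)| dξ < ∞ set θ₀^ε(x) = g_ε(x) · (h_ε * θ₀)(x). Then ∫_ℝ |ξ| |θ̂₀^ε(ξ)| dξ ≤ ∫_ℝ |ξ| |θ̂₀(ξ)| dξ + c √ε ∫_ℝ |θ̂₀(ξ)| dξ, i.e. ‖θ₀^ε‖_{Ȧ¹} ≤ ‖θ₀‖_{Ȧ¹} + c√ε ‖θ₀‖_{A⁰}. -/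

import Mathlib

open MeasureTheory

/-- The Fourier transform normalized as `f̂(ξ) = (2π)^{-1/2} ∫ f(x) e^{-ixξ} dx`. -/
noncomputable def fourierTrans (f : ℝ → ℂ) (ξ : ℝ) : ℂ :=
  (((2 * Real.pi) ^ (-(1 / 2 : ℝ)) : ℝ) : ℂ) *
    ∫ x : ℝ, f x * Complex.exp (-Complex.I * (x : ℂ) * (ξ : ℂ))

/-- The Gaussian `g_ε(x) = e^{−εx²}`. -/
noncomputable def gaussMult (ε x : ℝ) : ℝ := Real.exp (-ε * x ^ 2)

/-- The heat kernel at time `ε`: `h_ε(x) = (4πε)^{−1/2} e^{−x²/(4ε)}`. -/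
noncomputable def heatKer (ε x : ℝ) : ℝ :=
  (4 * Real.pi * ε) ^ (-(1 / 2 : ℝ)) * Real.exp (-x ^ 2 / (4 * ε))

/-- The regularization `θ₀^ε(x) = g_ε(x) · (h_ε * θ₀)(x)`. -/
noncomputable def regData (ε : ℝ) (θ₀ : ℝ → ℂ) (x : ℝ) : ℂ :=
  ((gaussMult ε x : ℝ) : ℂ) * ∫ y : ℝ, ((heatKer ε (x - y) : ℝ) : ℂ) * θ₀ y

open Real Complex Filter

lemma phase_norm (x ξ : ℝ) : ‖Complex.exp (-Complex.I * (x:ℂ) * (ξ:ℂ))‖ = 1 := by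
  rw [Complex.norm_exp]
  simp

lemma fourierTrans_continuous {θ : ℝ → ℂ} (hθ : Integrable θ) :
    Continuous (fourierTrans θ) := by
  unfold fourierTrans
  refine continuous_const.mul ?_
  refine continuous_of_dominated (F := fun (ξ : ℝ) (x : ℝ) => θ x * Complex.exp (-Complex.I * (x:ℂ) * (ξ:ℂ))) (bound := fun x => ‖θ x‖) ?_ ?_ ?_ ?_
  · intro ξ
    exact hθ.aestronglyMeasurable.mul
      (Complex.continuous_exp.comp (by continuity)).aestronglyMeasurable
  · intro ξ
    filter_upwards with x
    rw [norm_mul, phase_norm, mul_one]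
  · exact hθ.norm
  · filter_upwards with x
    exact continuous_const.mul (Complex.continuous_exp.comp (by continuity))

lemma heatKer_nonneg {ε : ℝ} (hε : 0 < ε) (x : ℝ) : 0 ≤ heatKer ε x := by
  unfold heatKer
  positivity

lemma heatKer_eq {ε : ℝ} (hε : 0 < ε) (x : ℝ) :
    heatKer ε x = (4 * Real.pi * ε) ^ (-(1 / 2 : ℝ)) * Real.exp (-(1/(4*ε)) * x ^ 2) := by
  unfold heatKer
  congr 1
  rw [neg_div, mul_comm]
  congr 1
  ring

lemma heatKer_integrable {ε : ℝ} (hε : 0 < ε) : Integrable (heatKer ε) := by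
  have : Integrable fun x : ℝ => Real.exp (-(1/(4*ε)) * x ^ 2) :=
    integrable_exp_neg_mul_sq (by positivity)
  exact (this.const_mul _).congr (by filter_upwards with x; rw [← heatKer_eq hε])

lemma heatKer_integral {ε : ℝ} (hε : 0 < ε) : ∫ x : ℝ, heatKer ε x = 1 := by
  have h4 : (0:ℝ) < 4 * Real.pi * ε := by positivity
  simp_rw [heatKer_eq hε]
  rw [integral_const_mul, integral_gaussian]
  rw [Real.rpow_neg h4.le, Real.sqrt_eq_rpow]
  rw [show Real.pi / (1/(4*ε)) = 4 * Real.pi * ε by field_simp]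
  rw [inv_mul_eq_div, div_eq_one_iff_eq]
  positivity

-- ∫ x in Ioi 0, x * exp (-b x²) = (2b)⁻¹
lemma integral_Ioi_mul_exp {b : ℝ} (hb : 0 < b) :
    ∫ x in Set.Ioi (0:ℝ), x * Real.exp (-b * x ^ 2) = (2*b)⁻¹ := by
  have hderiv : ∀ x ∈ Set.Ici (0:ℝ), HasDerivAt (fun u : ℝ => -(2*b)⁻¹ * Real.exp (-b * u ^ 2))
      (x * Real.exp (-b * x ^ 2)) x := by
    intro x _
    have h1 : HasDerivAt (fun u : ℝ => -b * u ^ 2) (-b * (2 * x)) x := by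
      simpa using ((hasDerivAt_pow 2 x).const_mul (-b))
    have h2 := (h1.exp).const_mul (-(2*b)⁻¹)
    refine h2.congr_deriv ?_
    have hbb : (2*b)⁻¹ * (2*b) = 1 := inv_mul_cancel₀ (by positivity)
    linear_combination (x * Real.exp (-b * x ^ 2)) * hbb
  have hint : IntegrableOn (fun x : ℝ => x * Real.exp (-b * x ^ 2)) (Set.Ioi 0) :=
    (integrable_mul_exp_neg_mul_sq hb).integrableOn
  have htend : Tendsto (fun u : ℝ => -(2*b)⁻¹ * Real.exp (-b * u ^ 2)) atTop (nhds 0) := by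
    rw [show (0:ℝ) = -(2*b)⁻¹ * 0 by ring]
    refine Tendsto.const_mul _ ?_
    apply Real.tendsto_exp_atBot.comp
    have h3 : Tendsto (fun u : ℝ => b * u ^ 2) atTop atTop :=
      (tendsto_pow_atTop (by norm_num)).const_mul_atTop hb
    exact (tendsto_neg_atTop_atBot.comp h3).congr (fun u => by simp)
  have := integral_Ioi_of_hasDerivAt_of_tendsto' hderiv hint htend
  rw [this]
  norm_num

lemma integral_abs_mul_exp {b : ℝ} (hb : 0 < b) :
    ∫ x : ℝ, |x| * Real.exp (-b * x ^ 2) = b⁻¹ := by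
  have h : ∀ x : ℝ, |x| * Real.exp (-b * x ^ 2) = (fun t => t * Real.exp (-b * t ^ 2)) |x| := by
    intro x; simp [sq_abs]
  simp_rw [h]
  rw [integral_comp_abs (f := fun t => t * Real.exp (-b * t ^ 2)), integral_Ioi_mul_exp hb]
  field_simp

lemma integrable_abs_mul_exp {b : ℝ} (hb : 0 < b) :
    Integrable fun x : ℝ => |x| * Real.exp (-b * x ^ 2) := by
  have := (integrable_mul_exp_neg_mul_sq hb).abs
  refine this.congr ?_
  filter_upwards with x
  rw [abs_mul, abs_of_pos (Real.exp_pos _)]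
lemma abs_heatKer_integrable {ε : ℝ} (hε : 0 < ε) :
    Integrable fun x : ℝ => |x| * heatKer ε x := by
  have := (integrable_abs_mul_exp (b := 1/(4*ε)) (by positivity)).const_mul
    ((4 * Real.pi * ε) ^ (-(1 / 2 : ℝ)))
  refine this.congr ?_
  filter_upwards with x
  rw [heatKer_eq hε]; ring

lemma abs_heatKer_integral_le {ε : ℝ} (hε : 0 < ε) :
    ∫ x : ℝ, |x| * heatKer ε x ≤ 2 * Real.sqrt ε := by
  have h1 : ∫ x : ℝ, |x| * heatKer ε x
      = (4 * Real.pi * ε) ^ (-(1 / 2 : ℝ)) * (4*ε) := by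
    have : ∀ x : ℝ, |x| * heatKer ε x
        = (4 * Real.pi * ε) ^ (-(1 / 2 : ℝ)) * (|x| * Real.exp (-(1/(4*ε)) * x ^ 2)) := by
      intro x; rw [heatKer_eq hε]; ring
    simp_rw [this]
    rw [integral_const_mul, integral_abs_mul_exp (by positivity)]
    congr 1
    field_simp
  rw [h1]
  have h2 : (4 * Real.pi * ε) ^ (-(1 / 2 : ℝ)) ≤ (4 * ε) ^ (-(1 / 2 : ℝ)) := by
    apply Real.rpow_le_rpow_of_nonpos (by positivity) ?_ (by norm_num)
    nlinarith [Real.pi_gt_three]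
  have h4 : Real.sqrt (4*ε) = 2 * Real.sqrt ε := by
    rw [Real.sqrt_mul (by norm_num : (0:ℝ) ≤ 4), show (4:ℝ) = 2^2 by norm_num,
      Real.sqrt_sq (by norm_num : (0:ℝ) ≤ 2)]
  have h3 : (4 * ε) ^ (-(1 / 2 : ℝ)) * (4*ε) = 2 * Real.sqrt ε := by
    rw [Real.rpow_neg (by positivity), ← Real.sqrt_eq_rpow, ← h4]
    have hpos : (0:ℝ) < Real.sqrt (4*ε) := Real.sqrt_pos.mpr (by positivity)
    nth_rewrite 2 [show (4*ε) = Real.sqrt (4*ε) * Real.sqrt (4*ε) from (Real.mul_self_sqrt (by positivity)).symm]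
    field_simp
  calc (4 * Real.pi * ε) ^ (-(1 / 2 : ℝ)) * (4*ε) ≤ (4 * ε) ^ (-(1 / 2 : ℝ)) * (4*ε) := by
        apply mul_le_mul_of_nonneg_right h2 (by positivity)
    _ = 2 * Real.sqrt ε := h3

lemma kernel_swap {ε : ℝ} (hε : 0 < ε) (ξ y : ℝ) :
    ∫ x : ℝ, ((gaussMult ε x : ℝ):ℂ) * ((heatKer ε (x - y) : ℝ):ℂ) *
        Complex.exp (-Complex.I * (x:ℂ) * (ξ:ℂ))
      = ∫ η : ℝ, (((heatKer ε (ξ - η) * Real.exp (-ε * η^2)) : ℝ):ℂ) *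
        Complex.exp (-Complex.I * (y:ℂ) * (η:ℂ)) := by
  have hε' : (ε:ℂ) ≠ 0 := by exact_mod_cast hε.ne'
  set K0 : ℝ := (4 * Real.pi * ε) ^ (-(1 / 2 : ℝ)) with hK0
  set b : ℂ := ((-(ε + (4*ε)⁻¹) : ℝ) : ℂ) with hbdef
  have hb : b.re < 0 := by
    rw [hbdef, Complex.ofReal_re]
    have : 0 < ε + (4*ε)⁻¹ := by positivity
    linarith
  have hb0 : b ≠ 0 := by
    simp only [hbdef, ne_eq, Complex.ofReal_eq_zero]
    have : 0 < ε + (4*ε)⁻¹ := by positivity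
    intro h; rw [neg_eq_zero] at h; linarith
  set c₁ : ℂ := ((y/(2*ε) : ℝ) : ℂ) - Complex.I * ξ with hc1
  set d₁ : ℂ := ((-(y^2)/(4*ε) : ℝ) : ℂ) with hd1
  set c₂ : ℂ := ((ξ/(2*ε) : ℝ) : ℂ) - Complex.I * y with hc2
  set d₂ : ℂ := ((-(ξ^2)/(4*ε) : ℝ) : ℂ) with hd2
  have hL : ∀ x : ℝ, ((gaussMult ε x : ℝ):ℂ) * ((heatKer ε (x - y) : ℝ):ℂ) *
      Complex.exp (-Complex.I * (x:ℂ) * (ξ:ℂ))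
      = (K0:ℂ) * Complex.exp (b * x^2 + c₁ * x + d₁) := by
    intro x
    unfold gaussMult heatKer
    rw [← hK0]
    push_cast
    rw [show (Complex.exp (-ε * x ^ 2) * ((K0:ℂ) * Complex.exp (-(x - y) ^ 2 / (4 * ε))) *
        Complex.exp (-Complex.I * x * ξ))
        = (K0:ℂ) * (Complex.exp (-ε * x ^ 2) * Complex.exp (-(x - y) ^ 2 / (4 * ε)) *
          Complex.exp (-Complex.I * x * ξ)) by ring,
      ← Complex.exp_add, ← Complex.exp_add]
    congr 2
    rw [hbdef, hc1, hd1]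
    push_cast
    field_simp
    ring
  have hR : ∀ η : ℝ, (((heatKer ε (ξ - η) * Real.exp (-ε * η^2)) : ℝ):ℂ) *
      Complex.exp (-Complex.I * (y:ℂ) * (η:ℂ))
      = (K0:ℂ) * Complex.exp (b * η^2 + c₂ * η + d₂) := by
    intro η
    unfold heatKer
    rw [← hK0]
    push_cast
    rw [show ((K0:ℂ) * Complex.exp (-(ξ - η) ^ 2 / (4 * ε)) * Complex.exp (-ε * η ^ 2) *
        Complex.exp (-Complex.I * y * η))
        = (K0:ℂ) * (Complex.exp (-(ξ - η) ^ 2 / (4 * ε)) * Complex.exp (-ε * η ^ 2) *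
          Complex.exp (-Complex.I * y * η)) by ring,
      ← Complex.exp_add, ← Complex.exp_add]
    congr 2
    rw [hbdef, hc2, hd2]
    push_cast
    field_simp
    ring
  simp_rw [hL, hR, integral_const_mul, integral_cexp_quadratic hb]
  congr 2
  congr 1
  have h4b : (4:ℂ) * b ≠ 0 := mul_ne_zero (by norm_num) hb0
  rw [sub_eq_sub_iff_sub_eq_sub, div_sub_div_same, eq_comm, div_eq_iff h4b]
  rw [hc1, hc2, hd1, hd2, hbdef]
  push_cast
  linear_combination ((ξ:ℂ)^2 - (y:ℂ)^2) * Complex.I_sq + ((ξ:ℂ)^2 - (y:ℂ)^2) * (mul_inv_cancel₀ hε')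

lemma heatKer_continuous {ε : ℝ} (hε : 0 < ε) : Continuous (heatKer ε) := by
  unfold heatKer
  fun_prop

lemma key_identity {ε : ℝ} (hε : 0 < ε) {θ : ℝ → ℂ} (hθ : Integrable θ) (ξ : ℝ) :
    fourierTrans (regData ε θ) ξ
      = ∫ η : ℝ, (((heatKer ε (ξ - η) * Real.exp (-ε * η^2)) : ℝ):ℂ) * fourierTrans θ η := by
  have hKc : Integrable fun u : ℝ => ((heatKer ε u : ℝ):ℂ) := (heatKer_integrable hε).ofReal
  -- F : the full integrand on the (x,y) product space
  set F : ℝ → ℝ → ℂ := fun x y =>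
    ((gaussMult ε x : ℝ):ℂ) * ((heatKer ε (x - y) : ℝ):ℂ) * θ y *
      Complex.exp (-Complex.I * (x:ℂ) * (ξ:ℂ)) with hF
  have hFint : Integrable (Function.uncurry F) (volume.prod volume) := by
    have conv := hθ.convolution_integrand (ContinuousLinearMap.mul ℝ ℂ) hKc
    have hbdd : Integrable (fun p : ℝ × ℝ =>
        (((gaussMult ε p.1 : ℝ):ℂ) * Complex.exp (-Complex.I * (p.1:ℂ) * (ξ:ℂ))) *
          (θ p.2 * ((heatKer ε (p.1 - p.2) : ℝ):ℂ))) (volume.prod volume) := by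
      refine conv.bdd_mul ?_ (c := 1) (Filter.Eventually.of_forall fun p => ?_)
      · apply Continuous.aestronglyMeasurable
        apply Continuous.mul
        · have : Continuous fun p : ℝ × ℝ => ((gaussMult ε p.1 : ℝ):ℂ) := by
            unfold gaussMult; fun_prop
          exact this
        · exact Complex.continuous_exp.comp (by continuity)
      · rw [norm_mul, phase_norm, mul_one, Complex.norm_real, Real.norm_eq_abs]
        unfold gaussMult
        rw [abs_of_pos (Real.exp_pos _)]
        exact Real.exp_le_one_iff.mpr (by nlinarith [sq_nonneg p.1])
    refine hbdd.congr ?_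
    filter_upwards with p
    simp only [hF, Function.uncurry]
    ring
  -- w : the weight on the frequency side
  set w : ℝ → ℝ := fun η => heatKer ε (ξ - η) * Real.exp (-ε * η^2) with hw
  have hw_cont : Continuous w := by
    apply Continuous.mul ((heatKer_continuous hε).comp (by continuity))
    fun_prop
  have hw_nonneg : ∀ η, 0 ≤ w η := fun η =>
    mul_nonneg (heatKer_nonneg hε _) (Real.exp_pos _).le
  have hw_int : Integrable w := by
    refine Integrable.mono' ((heatKer_integrable hε).comp_sub_left ξ) hw_cont.aestronglyMeasurable ?_
    filter_upwards with η
    rw [Real.norm_eq_abs, _root_.abs_of_nonneg (hw_nonneg η)]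
    calc w η ≤ heatKer ε (ξ - η) * 1 := by
          refine mul_le_mul_of_nonneg_left ?_ (heatKer_nonneg hε _)
          exact Real.exp_le_one_iff.mpr (by nlinarith [sq_nonneg η])
      _ = heatKer ε (ξ - η) := mul_one _
  -- G : the integrand on the (η,y)-side product space
  set G : ℝ → ℝ → ℂ := fun y η => θ y * ((w η : ℝ):ℂ) *
      Complex.exp (-Complex.I * (y:ℂ) * (η:ℂ)) with hG
  have hGint : Integrable (Function.uncurry G) (volume.prod volume) := by
    refine Integrable.mono' (hθ.norm.mul_prod hw_int) ?_ ?_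
    · apply AEStronglyMeasurable.mul
      · exact (hθ.aestronglyMeasurable.comp_fst).mul
          ((Complex.continuous_ofReal.comp (hw_cont.comp continuous_snd)).aestronglyMeasurable)
      · exact (Complex.continuous_exp.comp (by continuity)).aestronglyMeasurable
    · filter_upwards with p
      simp only [hG, Function.uncurry]
      rw [norm_mul, phase_norm, mul_one, norm_mul, Complex.norm_real, Real.norm_eq_abs,
        _root_.abs_of_nonneg (hw_nonneg _)]
  -- now compute
  unfold fourierTrans regData
  have step1 : ∀ x : ℝ,
      (((gaussMult ε x : ℝ):ℂ) * ∫ y : ℝ, ((heatKer ε (x - y) : ℝ) : ℂ) * θ y) *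
        Complex.exp (-Complex.I * (x:ℂ) * (ξ:ℂ)) = ∫ y : ℝ, F x y := by
    intro x
    rw [mul_comm _ (∫ y : ℝ, ((heatKer ε (x - y) : ℝ) : ℂ) * θ y), mul_assoc,
      ← integral_mul_const]
    refine integral_congr_ae (Filter.Eventually.of_forall fun y => ?_)
    simp only [hF]; ring
  simp_rw [step1]
  rw [integral_integral_swap hFint]
  have step2 : ∀ y : ℝ, (∫ x : ℝ, F x y) = ∫ η : ℝ, G y η := by
    intro y
    have : (∫ x : ℝ, F x y) = θ y * ∫ x : ℝ, ((gaussMult ε x : ℝ):ℂ) *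
        ((heatKer ε (x - y) : ℝ):ℂ) * Complex.exp (-Complex.I * (x:ℂ) * (ξ:ℂ)) := by
      rw [← integral_const_mul]
      refine integral_congr_ae (Filter.Eventually.of_forall fun x => ?_)
      simp only [hF]; ring
    rw [this, kernel_swap hε ξ y, ← integral_const_mul]
    refine integral_congr_ae (Filter.Eventually.of_forall fun η => ?_)
    simp only [hG, hw]
    push_cast
    ring
  simp_rw [step2]
  rw [integral_integral_swap hGint]
  rw [← integral_const_mul]
  refine integral_congr_ae (Filter.Eventually.of_forall fun η => ?_)
  have hpull : ∫ x : ℝ, G x η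
      = ((w η : ℝ):ℂ) * ∫ x : ℝ, θ x * Complex.exp (-Complex.I * (x:ℂ) * (η:ℂ)) := by
    rw [← integral_const_mul]
    refine integral_congr_ae (Filter.Eventually.of_forall fun x => ?_)
    simp only [hG]; ring
  dsimp only
  rw [hpull]
  simp only [hw]
  push_cast
  ring

/-- There is a universal constant `c > 0` such that the regularization
`θ₀^ε = g_ε · (h_ε * θ₀)` of data `θ₀ ∈ L¹` with `(1 + |ξ|)θ̂₀ ∈ L¹` satisfies
`‖θ₀^ε‖_{Ȧ¹} ≤ ‖θ₀‖_{Ȧ¹} + c√ε ‖θ₀‖_{A⁰}`. -/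
theorem regularization_A1_bound :
    ∃ c > 0, ∀ (ε : ℝ), 0 < ε → ∀ (θ₀ : ℝ → ℂ), Integrable θ₀ →
      Integrable (fun ξ : ℝ => (1 + |ξ|) * ‖fourierTrans θ₀ ξ‖) →
      (∫ ξ : ℝ, |ξ| * ‖fourierTrans (regData ε θ₀) ξ‖) ≤
        (∫ ξ : ℝ, |ξ| * ‖fourierTrans θ₀ ξ‖) +
          c * Real.sqrt ε * ∫ ξ : ℝ, ‖fourierTrans θ₀ ξ‖ := by
  refine ⟨2, by norm_num, fun ε hε θ₀ hθ hF1 => ?_⟩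
  set φ : ℝ → ℝ := fun η => ‖fourierTrans θ₀ η‖ with hφdef
  have hφc : Continuous φ := (fourierTrans_continuous hθ).norm
  have hφ0 : ∀ η, 0 ≤ φ η := fun η => norm_nonneg _
  have hφ : Integrable φ := by
    refine hF1.mono' hφc.aestronglyMeasurable ?_
    filter_upwards with η
    rw [Real.norm_eq_abs, _root_.abs_of_nonneg (hφ0 η)]
    nlinarith [hφ0 η, abs_nonneg η]
  have hηφ : Integrable fun η => |η| * φ η := by
    refine hF1.mono' (continuous_abs.mul hφc).aestronglyMeasurable ?_
    filter_upwards with η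
    rw [Real.norm_eq_abs, _root_.abs_of_nonneg (mul_nonneg (abs_nonneg η) (hφ0 η))]
    nlinarith [hφ0 η, abs_nonneg η]
  -- the two dominating kernels on the product space
  set T1 : ℝ → ℝ → ℝ := fun ξ η => φ η * (|ξ - η| * heatKer ε (ξ - η)) with hT1def
  set T2 : ℝ → ℝ → ℝ := fun ξ η => (|η| * φ η) * heatKer ε (ξ - η) with hT2def
  have hT1 : Integrable (Function.uncurry T1) (volume.prod volume) := by
    have := hφ.convolution_integrand (ContinuousLinearMap.mul ℝ ℝ) (abs_heatKer_integrable hε)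
    refine this.congr ?_
    filter_upwards with p
    simp [hT1def, Function.uncurry]
  have hT2 : Integrable (Function.uncurry T2) (volume.prod volume) := by
    have := hηφ.convolution_integrand (ContinuousLinearMap.mul ℝ ℝ) (heatKer_integrable hε)
    refine this.congr ?_
    filter_upwards with p
    simp [hT2def, Function.uncurry]
  have hT : Integrable (Function.uncurry (fun ξ η => T1 ξ η + T2 ξ η)) (volume.prod volume) := by
    refine (hT1.add hT2).congr ?_
    filter_upwards with p
    simp [Function.uncurry]
  -- a.e. pointwise bound
  have hbound : ∀ᵐ ξ : ℝ, |ξ| * ‖fourierTrans (regData ε θ₀) ξ‖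
      ≤ ∫ η : ℝ, (T1 ξ η + T2 ξ η) := by
    filter_upwards [hT.prod_right_ae] with ξ hsl
    have h1 : ‖fourierTrans (regData ε θ₀) ξ‖
        ≤ ∫ η : ℝ, heatKer ε (ξ - η) * Real.exp (-ε * η^2) * φ η := by
      rw [key_identity hε hθ ξ]
      refine (norm_integral_le_integral_norm _).trans_eq ?_
      refine integral_congr_ae (Filter.Eventually.of_forall fun η => ?_)
      dsimp only
      rw [norm_mul, Complex.norm_real, Real.norm_eq_abs,
        _root_.abs_of_nonneg (mul_nonneg (heatKer_nonneg hε _) (Real.exp_pos _).le)]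
    calc |ξ| * ‖fourierTrans (regData ε θ₀) ξ‖
        ≤ |ξ| * ∫ η : ℝ, heatKer ε (ξ - η) * Real.exp (-ε * η^2) * φ η :=
          mul_le_mul_of_nonneg_left h1 (abs_nonneg ξ)
      _ = ∫ η : ℝ, |ξ| * (heatKer ε (ξ - η) * Real.exp (-ε * η^2) * φ η) := by
          rw [integral_const_mul]
      _ ≤ ∫ η : ℝ, (T1 ξ η + T2 ξ η) := by
          refine integral_mono_of_nonneg ?_ hsl ?_
          · filter_upwards with η
            have := heatKer_nonneg hε (ξ - η)
            positivity
          · filter_upwards with η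
            simp only [hT1def, hT2def]
            have hk := heatKer_nonneg hε (ξ - η)
            have he : Real.exp (-ε * η^2) ≤ 1 :=
              Real.exp_le_one_iff.mpr (by nlinarith [sq_nonneg η])
            have habs : |ξ| ≤ |ξ - η| + |η| := by
              calc |ξ| = |(ξ - η) + η| := by ring_nf
                _ ≤ |ξ - η| + |η| := abs_add_le _ _
            have hkφ : 0 ≤ heatKer ε (ξ - η) * φ η := mul_nonneg hk (hφ0 η)
            have step1 : |ξ| * (heatKer ε (ξ - η) * Real.exp (-ε * η^2) * φ η)
                ≤ |ξ| * (heatKer ε (ξ - η) * φ η) := by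
              refine mul_le_mul_of_nonneg_left ?_ (abs_nonneg ξ)
              nlinarith [hφ0 η]
            have step2 : |ξ| * (heatKer ε (ξ - η) * φ η)
                ≤ (|ξ - η| + |η|) * (heatKer ε (ξ - η) * φ η) :=
              mul_le_mul_of_nonneg_right habs hkφ
            exact le_trans step1 (step2.trans_eq (by ring))
  -- integrate the bound
  have main : (∫ ξ : ℝ, |ξ| * ‖fourierTrans (regData ε θ₀) ξ‖)
      ≤ ∫ ξ : ℝ, ∫ η : ℝ, (T1 ξ η + T2 ξ η) := by
    refine integral_mono_of_nonneg ?_ hT.integral_prod_left hbound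
    filter_upwards with ξ
    positivity
  have hsplit : (∫ ξ : ℝ, ∫ η : ℝ, (T1 ξ η + T2 ξ η))
      = (∫ ξ : ℝ, ∫ η : ℝ, T1 ξ η) + ∫ ξ : ℝ, ∫ η : ℝ, T2 ξ η := by
    have e1 : (∫ ξ : ℝ, ∫ η : ℝ, (T1 ξ η + T2 ξ η))
        = ∫ ξ : ℝ, ((∫ η : ℝ, T1 ξ η) + ∫ η : ℝ, T2 ξ η) := by
      refine integral_congr_ae ?_
      filter_upwards [hT1.prod_right_ae, hT2.prod_right_ae] with ξ h1 h2
      exact integral_add h1 h2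
    rw [e1]
    exact integral_add hT1.integral_prod_left hT2.integral_prod_left
  have hI1 : (∫ ξ : ℝ, ∫ η : ℝ, T1 ξ η) ≤ 2 * Real.sqrt ε * ∫ ξ : ℝ, φ ξ := by
    rw [integral_integral_swap hT1]
    have : ∀ η : ℝ, (∫ ξ : ℝ, T1 ξ η) = φ η * ∫ x : ℝ, |x| * heatKer ε x := by
      intro η
      simp only [hT1def]
      rw [integral_const_mul, integral_sub_right_eq_self (fun u => |u| * heatKer ε u) η]
    simp_rw [this]
    rw [integral_mul_const]
    rw [mul_comm (2 * Real.sqrt ε) _]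
    refine mul_le_mul_of_nonneg_left (abs_heatKer_integral_le hε)
      (integral_nonneg hφ0)
  have hI2 : (∫ ξ : ℝ, ∫ η : ℝ, T2 ξ η) = ∫ η : ℝ, |η| * φ η := by
    rw [integral_integral_swap hT2]
    refine integral_congr_ae (Filter.Eventually.of_forall fun η => ?_)
    simp only [hT2def]
    rw [integral_const_mul, integral_sub_right_eq_self (fun u => heatKer ε u) η,
      heatKer_integral hε, mul_one]
  calc (∫ ξ : ℝ, |ξ| * ‖fourierTrans (regData ε θ₀) ξ‖)
      ≤ (∫ ξ : ℝ, ∫ η : ℝ, T1 ξ η) + ∫ ξ : ℝ, ∫ η : ℝ, T2 ξ η := by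
        rw [← hsplit]; exact main
    _ ≤ (2 * Real.sqrt ε * ∫ ξ : ℝ, φ ξ) + ∫ η : ℝ, |η| * φ η := by
        exact add_le_add hI1 (le_of_eq hI2)
    _ = (∫ ξ : ℝ, |ξ| * ‖fourierTrans θ₀ ξ‖) +
          2 * Real.sqrt ε * ∫ ξ : ℝ, ‖fourierTrans θ₀ ξ‖ := by
        rw [add_comm]
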